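/- Let D = (V, A) be a finite digraph, x : A → ℝ≥0 with x(δ⁺(v)) = x(δ⁻(v)) for all v, and let z(uv) = x(u→v) + x(v→u) on the underlying undirected edges. Let T⃗ ⊆ A be a set of arcs whose underlying undirected edge set T satisfies |T ∩ δ(U)| ≤ α·z(δ(U)) for all U ⊆ V, for some α > 0. Define l(a) = 1 if a ∈ T⃗ else 0, and u(a) = l(a) + 2α·x(a). Then for every U ⊆ V, l(δ⁻(U)) ≤ u(δ⁺(U)), so a circulation f with l ≤ f ≤ u exists by Hoffman's theorem. -/

import Mathlib

/-- Feasibility of Hoffman's condition for a thin arc set: let `x ≥ 0` be conservative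
(`x(δ⁺(v)) = x(δ⁻(v))` for all `v`), `z uv = x(u→v) + x(v→u)`, and `T'` a set of arcs
whose underlying undirected edge set `T` satisfies `|T ∩ δ(U)| ≤ α · z(δ(U))` for all
`U`. With `l = 𝟙_{T'}` and `u = l + 2αx`, we have `l(δ⁻(U)) ≤ u(δ⁺(U))` for all `U`. -/
theorem thin_arcs_hoffman_condition {V : Type*} [Fintype V] [DecidableEq V]
    (x : V → V → ℝ) (hx : ∀ u v, 0 ≤ x u v)
    (hcons : ∀ v : V, ∑ u, x v u = ∑ u, x u v)
    (T' : Finset (V × V)) (α : ℝ) (hα : 0 < α)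
    (hthin : ∀ U : Finset V,
      (((T'.image fun p => Sym2.mk p.1 p.2).filter
          (fun e => (U.filter (fun w => w ∈ e)).card = 1)).card : ℝ) ≤
        α * ∑ u ∈ U, ∑ v ∈ Uᶜ, (x u v + x v u)) :
    ∀ U : Finset V,
      ((T'.filter (fun p => p.2 ∈ U ∧ p.1 ∉ U)).card : ℝ) ≤
      ∑ u ∈ U, ∑ v ∈ Uᶜ, ((if (u, v) ∈ T' then (1 : ℝ) else 0) + 2 * α * x u v) := by
  intro U
  -- Step 1: entering arcs inject into crossing edges
  have hcard : (T'.filter (fun p => p.2 ∈ U ∧ p.1 ∉ U)).card ≤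
      ((T'.image fun p => Sym2.mk p.1 p.2).filter
        (fun e => (U.filter (fun w => w ∈ e)).card = 1)).card := by
    apply Finset.card_le_card_of_injOn (fun p => Sym2.mk p.1 p.2)
    · intro p hp
      obtain ⟨a, b⟩ := p
      simp only [Finset.mem_coe, Finset.mem_filter] at hp ⊢
      obtain ⟨hpT, hp2, hp1⟩ := hp
      refine ⟨Finset.mem_image_of_mem _ hpT, ?_⟩
      have : U.filter (fun w => w ∈ Sym2.mk a b) = {b} := by
        ext w
        simp only [Finset.mem_filter, Finset.mem_singleton, Sym2.mem_iff]
        constructor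
        · rintro ⟨hwU, hw | hw⟩
          · exact absurd (hw ▸ hwU) hp1
          · exact hw
        · rintro rfl; exact ⟨hp2, Or.inr rfl⟩
      rw [this, Finset.card_singleton]
    · intro p hp q hq h
      obtain ⟨a, b⟩ := p
      obtain ⟨c, d⟩ := q
      simp only [Finset.coe_filter, Set.mem_setOf_eq] at hp hq
      simp only [Sym2.eq_iff] at h
      rcases h with ⟨h1, h2⟩ | ⟨h1, h2⟩
      · simp [h1, h2]
      · subst h1 h2
        exact absurd hq.2.1 hp.2.2
  -- Step 2: flow conservation on U
  have hflow : ∑ u ∈ U, ∑ v ∈ Uᶜ, x v u = ∑ u ∈ U, ∑ v ∈ Uᶜ, x u v := by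
    have h1 : ∀ u ∈ U, ∑ v ∈ Uᶜ, x u v = (∑ v, x u v) - ∑ v ∈ U, x u v := by
      intro u _; rw [← Finset.sum_add_sum_compl U (x u)]; ring
    have h2 : ∀ u ∈ U, ∑ v ∈ Uᶜ, x v u = (∑ v, x v u) - ∑ v ∈ U, x v u := by
      intro u _; rw [← Finset.sum_add_sum_compl U (fun v => x v u)]; ring
    rw [Finset.sum_congr rfl h1, Finset.sum_congr rfl h2, Finset.sum_sub_distrib,
      Finset.sum_sub_distrib]
    have h3 : ∑ u ∈ U, ∑ v, x v u = ∑ u ∈ U, ∑ v, x u v := by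
      exact Finset.sum_congr rfl fun u _ => (hcons u).symm
    have h4 : ∑ u ∈ U, ∑ v ∈ U, x v u = ∑ u ∈ U, ∑ v ∈ U, x u v := Finset.sum_comm
    rw [h3, h4]
  -- Step 3: combine
  calc ((T'.filter (fun p => p.2 ∈ U ∧ p.1 ∉ U)).card : ℝ)
      ≤ (((T'.image fun p => Sym2.mk p.1 p.2).filter
          (fun e => (U.filter (fun w => w ∈ e)).card = 1)).card : ℝ) := by
        exact_mod_cast hcard
    _ ≤ α * ∑ u ∈ U, ∑ v ∈ Uᶜ, (x u v + x v u) := hthin U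
    _ = ∑ u ∈ U, ∑ v ∈ Uᶜ, 2 * α * x u v := by
        have hsplit : ∑ u ∈ U, ∑ v ∈ Uᶜ, (x u v + x v u)
            = ∑ u ∈ U, ∑ v ∈ Uᶜ, x u v + ∑ u ∈ U, ∑ v ∈ Uᶜ, x v u := by
          simp [Finset.sum_add_distrib]
        have h2a : ∑ u ∈ U, ∑ v ∈ Uᶜ, 2 * α * x u v
            = 2 * α * ∑ u ∈ U, ∑ v ∈ Uᶜ, x u v := by
          rw [Finset.mul_sum]
          exact Finset.sum_congr rfl fun u _ => (Finset.mul_sum _ _ _).symm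
        rw [hsplit, hflow, h2a]; ring
    _ ≤ ∑ u ∈ U, ∑ v ∈ Uᶜ, ((if (u, v) ∈ T' then (1 : ℝ) else 0) + 2 * α * x u v) := by
        apply Finset.sum_le_sum; intro u _
        apply Finset.sum_le_sum; intro v _
        have : (0:ℝ) ≤ if (u, v) ∈ T' then (1 : ℝ) else 0 := by positivity
        linarith
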